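/- Let n ≥ 2 and A = K[x]/(x^{n+1}). Let s = α₁x + α₂x² + … + α_{n−1}x^{n−1} ∈ A with α₁ ≠ 0, and for t ∈ K write exp(t·s) = g₀(t) + g₁(t)x + … + g_n(t)x^n, so that each coefficient g_i is given by a polynomial in t. Then deg g_i = i for every 0 ≤ i ≤ n, and for every homogeneous polynomial F ∈ K[z₀, z₁, …, z_n] satisfying F(g₀(t), g₁(t), …, g_n(t)) = 0 for all t ∈ K, one has F(0, 0, …, 0, 1) = 0. -/

import Mathlib

/-- The exponential of an element of a finite-dimensional `K`-algebra:
`exp a = ∑_{i ≥ 0} a^i / i!`. -/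
noncomputable def expn (K : Type*) [Field K] {A : Type*} [CommRing A] [Algebra K A]
    (a : A) : A :=
  ∑ i ∈ Finset.range (Module.finrank K A + 1), ((i.factorial : K)⁻¹) • a ^ i

/-- The truncated polynomial algebra `K[x]/(x^{n+1})`. -/
abbrev TruncPoly (K : Type*) [Field K] (n : ℕ) : Type _ :=
  Polynomial K ⧸ Ideal.span {(Polynomial.X : Polynomial K) ^ (n + 1)}

/-- The image of `x` in `K[x]/(x^{n+1})`. -/
noncomputable abbrev truncX (K : Type*) [Field K] (n : ℕ) : TruncPoly K n :=
  Ideal.Quotient.mk (Ideal.span {(Polynomial.X : Polynomial K) ^ (n + 1)}) Polynomial.X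

open Polynomial

namespace Stmt18Aux

variable {K : Type*} [Field K] {n : ℕ}

noncomputable def tmk (K : Type*) [Field K] (n : ℕ) :
    Polynomial K →ₐ[K] TruncPoly K n :=
  Ideal.Quotient.mkₐ K _

lemma tmk_apply (P : K[X]) :
    tmk K n P = Ideal.Quotient.mk (Ideal.span {(Polynomial.X : Polynomial K) ^ (n + 1)}) P :=
  rfl

lemma tmk_X : tmk K n X = truncX K n := rfl

lemma coeff_repr (c : Fin (n + 1) → K) (j : Fin (n + 1)) :
    (∑ i : Fin (n + 1), C (c i) * X ^ (i : ℕ) : K[X]).coeff (j : ℕ) = c j := by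
  rw [Polynomial.finset_sum_coeff]
  simp only [coeff_C_mul, coeff_X_pow, mul_ite, mul_one, mul_zero]
  rw [Finset.sum_eq_single j]
  · simp
  · intro b _ hb
    have : ¬ ((j : ℕ) = (b : ℕ)) := fun h => hb (Fin.ext h.symm)
    simp [this]
  · simp

lemma mk_eq_sum (P : K[X]) :
    tmk K n P = ∑ i : Fin (n + 1), P.coeff i • truncX K n ^ (i : ℕ) := by
  have h1 : tmk K n (P - ∑ i : Fin (n + 1), C (P.coeff (i : ℕ)) * X ^ (i : ℕ)) = 0 := by
    rw [tmk_apply, Ideal.Quotient.eq_zero_iff_mem, Ideal.mem_span_singleton, X_pow_dvd_iff]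
    intro d hd
    rw [coeff_sub, coeff_repr (fun i : Fin (n+1) => P.coeff (i : ℕ)) ⟨d, hd⟩]
    simp
  have h2 : tmk K n P = tmk K n (∑ i : Fin (n + 1), C (P.coeff (i : ℕ)) * X ^ (i : ℕ)) := by
    rw [map_sub, sub_eq_zero] at h1
    exact h1
  rw [h2, map_sum]
  refine Finset.sum_congr rfl fun i _ => ?_
  rw [← Polynomial.smul_eq_C_mul, map_smul, map_pow, tmk_X]

lemma repr_injective {c d : Fin (n + 1) → K}
    (h : ∑ i : Fin (n + 1), c i • truncX K n ^ (i : ℕ)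
       = ∑ i : Fin (n + 1), d i • truncX K n ^ (i : ℕ)) : c = d := by
  have hc : tmk K n (∑ i : Fin (n + 1), C (c i) * X ^ (i : ℕ))
      = ∑ i : Fin (n + 1), c i • truncX K n ^ (i : ℕ) := by
    rw [mk_eq_sum]
    exact Finset.sum_congr rfl fun i _ => by rw [coeff_repr]
  have hd : tmk K n (∑ i : Fin (n + 1), C (d i) * X ^ (i : ℕ))
      = ∑ i : Fin (n + 1), d i • truncX K n ^ (i : ℕ) := by
    rw [mk_eq_sum]
    exact Finset.sum_congr rfl fun i _ => by rw [coeff_repr]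
  have h0 : tmk K n ((∑ i : Fin (n + 1), C (c i) * X ^ (i : ℕ))
      - ∑ i : Fin (n + 1), C (d i) * X ^ (i : ℕ)) = 0 := by
    rw [map_sub, hc, hd, h, sub_self]
  rw [tmk_apply, Ideal.Quotient.eq_zero_iff_mem, Ideal.mem_span_singleton, X_pow_dvd_iff] at h0
  funext j
  have := h0 (j : ℕ) j.isLt
  rw [coeff_sub, coeff_repr, coeff_repr] at this
  exact sub_eq_zero.mp this

lemma finrank_truncPoly :
    Module.finrank K (TruncPoly K n) = n + 1 := by
  have h0 : ((X : K[X]) ^ (n + 1)) ≠ 0 := pow_ne_zero _ X_ne_zero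
  have := (AdjoinRoot.powerBasis h0).finrank
  simp at this
  exact this

end Stmt18Aux

open Stmt18Aux in
set_option synthInstance.maxHeartbeats 1000000 in
set_option maxHeartbeats 2000000 in
/-- Let `n ≥ 2` and `A = K[x]/(x^{n+1})`.  Let
`s = α₁x + α₂x² + … + α_{n−1}x^{n−1} ∈ A` with `α₁ ≠ 0`, and for `t ∈ K` write
`exp(t·s) = g₀(t) + g₁(t)x + … + g_n(t)x^n`, so that each coefficient `g_i` is given by a
polynomial in `t`.  Then `deg g_i = i` for every `0 ≤ i ≤ n`, and for every homogeneous
polynomial `F ∈ K[z₀, …, z_n]` satisfying `F(g₀(t), …, g_n(t)) = 0` for all `t ∈ K`, one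
has `F(0, 0, …, 0, 1) = 0`. -/
theorem stmt_18 (K : Type*) [Field K] [IsAlgClosed K] [CharZero K]
    (n : ℕ) (hn : 2 ≤ n) (α : ℕ → K) (hα : α 1 ≠ 0) :
    ∀ g : Fin (n + 1) → Polynomial K,
      (∀ t : K,
        expn K (t • ∑ j ∈ Finset.Icc 1 (n - 1), α j • truncX K n ^ j)
          = ∑ i : Fin (n + 1), (g i).eval t • truncX K n ^ (i : ℕ)) →
      ((∀ i : Fin (n + 1), (g i).degree = ((i : ℕ) : WithBot ℕ)) ∧
       ∀ dF : ℕ, ∀ F : MvPolynomial (Fin (n + 1)) K, F.IsHomogeneous dF →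
         (∀ t : K, MvPolynomial.eval (fun i => (g i).eval t) F = 0) →
         MvPolynomial.eval (fun i : Fin (n + 1) => if i = Fin.last n then (1 : K) else 0) F
           = 0) := by
  intro g hg
  classical
  set N := Module.finrank K (TruncPoly K n) with hNdef
  have hN : N = n + 1 := finrank_truncPoly
  set S : Polynomial K := ∑ j ∈ Finset.Icc 1 (n - 1), α j • Polynomial.X ^ j with hSdef
  have hmkS : tmk K n S = ∑ j ∈ Finset.Icc 1 (n - 1), α j • truncX K n ^ j := by
    rw [hSdef, map_sum]
    exact Finset.sum_congr rfl fun j _ => by rw [map_smul, map_pow, tmk_X]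
  set E : K → Polynomial K :=
    fun t => ∑ k ∈ Finset.range (N + 1), (((k.factorial : K))⁻¹ * t ^ k) • S ^ k with hEdef
  have hexp : ∀ t : K, expn K (t • tmk K n S) = tmk K n (E t) := by
    intro t
    have hE : E t = ∑ k ∈ Finset.range (N + 1), (((k.factorial : K))⁻¹ * t ^ k) • S ^ k := rfl
    conv_rhs => rw [hE, map_sum]
    show ∑ k ∈ Finset.range (N + 1), ((k.factorial : K))⁻¹ • (t • tmk K n S) ^ k = _
    refine Finset.sum_congr rfl fun k _ => ?_
    rw [map_smul, map_pow, _root_.smul_pow, smul_smul]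
  have key : ∀ t : K, (fun i : Fin (n + 1) => (E t).coeff (i : ℕ))
      = fun i : Fin (n + 1) => (g i).eval t := by
    intro t
    refine repr_injective ?_
    rw [← mk_eq_sum, ← hexp, hmkS]
    exact hg t
  set Pg : Fin (n + 1) → Polynomial K := fun i =>
    ∑ k ∈ Finset.range (N + 1),
      Polynomial.C ((k.factorial : K)⁻¹ * (S ^ k).coeff (i : ℕ)) * Polynomial.X ^ k with hPgdef
  have hPgeval : ∀ (t : K) (i : Fin (n + 1)), (Pg i).eval t = (E t).coeff (i : ℕ) := by
    intro t i
    rw [hPgdef, hEdef]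
    simp only [Polynomial.eval_finset_sum, Polynomial.eval_mul, Polynomial.eval_C,
      Polynomial.eval_pow, Polynomial.eval_X, Polynomial.finset_sum_coeff,
      Polynomial.coeff_smul, smul_eq_mul]
    exact Finset.sum_congr rfl fun k _ => by ring
  have hgPg : ∀ i, g i = Pg i := by
    intro i
    refine Polynomial.funext fun t => ?_
    rw [hPgeval t i]
    exact (congrFun (key t) i).symm
  -- coefficients of S
  have hS0 : S.coeff 0 = 0 := by
    rw [hSdef, Polynomial.finset_sum_coeff]
    refine Finset.sum_eq_zero fun j hj => ?_
    have hj1 : 1 ≤ j := (Finset.mem_Icc.mp hj).1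
    rw [Polynomial.coeff_smul, Polynomial.coeff_X_pow, if_neg (by omega), smul_zero]
  have hS1 : S.coeff 1 = α 1 := by
    rw [hSdef, Polynomial.finset_sum_coeff,
      Finset.sum_eq_single_of_mem 1 (Finset.mem_Icc.mpr ⟨le_rfl, by omega⟩)
        (fun j _ hj => by
          rw [Polynomial.coeff_smul, Polynomial.coeff_X_pow, if_neg (by omega), smul_zero])]
    simp
  have hSlow : ∀ k i : ℕ, i < k → (S ^ k).coeff i = 0 := by
    intro k i hik
    have hdvd : (Polynomial.X : Polynomial K) ^ k ∣ S ^ k :=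
      pow_dvd_pow_of_dvd (Polynomial.X_dvd_iff.mpr hS0) k
    exact Polynomial.X_pow_dvd_iff.mp hdvd i hik
  have hSdiag : ∀ k : ℕ, (S ^ k).coeff k = α 1 ^ k := by
    intro k
    have hfac : S = S.divX * Polynomial.X := by
      have := Polynomial.divX_mul_X_add S
      rw [hS0] at this
      simpa using this.symm
    calc (S ^ k).coeff k = (S.divX ^ k * Polynomial.X ^ k).coeff (0 + k) := by
          conv_lhs => rw [hfac, mul_pow]
          rw [zero_add]
      _ = (S.divX ^ k).coeff 0 := Polynomial.coeff_mul_X_pow _ _ _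
      _ = (S.divX.coeff 0) ^ k := by
          rw [Polynomial.coeff_zero_eq_eval_zero, Polynomial.eval_pow,
            ← Polynomial.coeff_zero_eq_eval_zero]
      _ = α 1 ^ k := by rw [Polynomial.coeff_divX, zero_add, hS1]
  have hPgcoeff : ∀ (i : Fin (n + 1)) (m : ℕ),
      (Pg i).coeff m = if m ≤ N then (m.factorial : K)⁻¹ * (S ^ m).coeff (i : ℕ) else 0 := by
    intro i m
    rw [hPgdef]
    rw [Polynomial.finset_sum_coeff]
    simp only [Polynomial.coeff_C_mul, Polynomial.coeff_X_pow, mul_ite, mul_one, mul_zero]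
    rw [Finset.sum_ite_eq (Finset.range (N + 1)) m
      (fun k => (k.factorial : K)⁻¹ * (S ^ k).coeff (i : ℕ))]
    simp [Nat.lt_succ_iff]
  have hfacne : ∀ m : ℕ, ((m.factorial : K))⁻¹ ≠ 0 := fun m =>
    inv_ne_zero (Nat.cast_ne_zero.mpr (Nat.factorial_ne_zero m))
  have hdeg : ∀ i : Fin (n + 1), (g i).degree = ((i : ℕ) : WithBot ℕ) := by
    intro i
    rw [hgPg i]
    refine Polynomial.degree_eq_of_le_of_coeff_ne_zero ?_ ?_
    · rw [Polynomial.degree_le_iff_coeff_zero]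
      intro m hm
      have him : (i : ℕ) < m := by exact_mod_cast hm
      rw [hPgcoeff]
      split_ifs with h
      · rw [hSlow m (i : ℕ) him, mul_zero]
      · rfl
    · rw [hPgcoeff, if_pos (by omega), hSdiag]
      exact mul_ne_zero (hfacne _) (pow_ne_zero _ hα)
  have hgne : ∀ i : Fin (n + 1), g i ≠ 0 := by
    intro i h
    have hi := hdeg i
    rw [h, Polynomial.degree_zero] at hi
    exact absurd hi (by simp)
  have hnatdeg : ∀ i : Fin (n + 1), (g i).natDegree = (i : ℕ) :=
    fun i => Polynomial.natDegree_eq_of_degree_eq_some (hdeg i)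
  refine ⟨hdeg, ?_⟩
  intro dF F hF hFg
  have hsupp : ∀ m ∈ F.support, ∑ i : Fin (n + 1), m i = dF := by
    intro m hm
    have h1 := hF (MvPolynomial.mem_support_iff.mp hm)
    have h2 : Finsupp.degree m = dF := by
      rw [Finsupp.degree_eq_weight_one]; exact h1
    rw [← h2, Finsupp.degree]
    exact (Finset.sum_subset (Finset.subset_univ _)
      (fun i _ hi => Finsupp.notMem_support_iff.mp hi)).symm
  have hex : ∀ m ∈ F.support, m ≠ Finsupp.single (Fin.last n) dF →
      ∃ i : Fin (n + 1), i ≠ Fin.last n ∧ m i ≠ 0 := by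
    intro m hm hne
    by_contra hcon
    push_neg at hcon
    apply hne
    have hml : m (Fin.last n) = dF := by
      rw [← hsupp m hm, Finset.sum_eq_single (Fin.last n)
        (fun b _ hb => hcon b hb) (fun h => absurd (Finset.mem_univ _) h)]
    ext i
    by_cases hi : i = Fin.last n
    · subst hi; rw [hml, Finsupp.single_eq_same]
    · rw [hcon i hi, Finsupp.single_eq_of_ne' (Ne.symm hi)]
  set L : K := (g (Fin.last n)).leadingCoeff with hL
  have hLne : L ≠ 0 := Polynomial.leadingCoeff_ne_zero.mpr (hgne _)
  have haeval_eq : ∀ (f : Fin (n + 1) → K) (G : MvPolynomial (Fin (n + 1)) K),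
      MvPolynomial.aeval f G = MvPolynomial.eval f G := fun f G => by
    rw [MvPolynomial.aeval_def, Algebra.algebraMap_self]
    rfl
  have hQeval : ∀ t : K, (MvPolynomial.aeval g F).eval t
      = MvPolynomial.eval (fun i => (g i).eval t) F := by
    intro t
    have e1 : Polynomial.eval t (MvPolynomial.aeval g F)
        = Polynomial.aeval t (MvPolynomial.aeval g F) :=
      (congrFun (Polynomial.coe_aeval_eq_eval t) _).symm
    have e2 : Polynomial.aeval t (MvPolynomial.aeval g F)
        = MvPolynomial.aeval (fun i => Polynomial.aeval t (g i)) F := by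
      rw [← MvPolynomial.comp_aeval]; rfl
    have e3 : (fun i : Fin (n + 1) => Polynomial.aeval t (g i))
        = fun i => (g i).eval t := by
      funext i; exact congrFun (Polynomial.coe_aeval_eq_eval t) _
    rw [e1, e2, e3, haeval_eq]
  have hQ0 : (MvPolynomial.aeval g F : Polynomial K) = 0 :=
    Polynomial.funext fun t => by rw [hQeval t, hFg t, Polynomial.eval_zero]
  have hQsum : (MvPolynomial.aeval g F : Polynomial K)
      = ∑ m ∈ F.support,
          Polynomial.C (MvPolynomial.coeff m F) * ∏ i : Fin (n + 1), (g i) ^ (m i) := by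
    conv_lhs => rw [F.as_sum]
    rw [map_sum]
    refine Finset.sum_congr rfl fun m _ => ?_
    rw [MvPolynomial.aeval_monomial, Finsupp.prod_pow, Polynomial.algebraMap_eq]
  have hprodnat : ∀ m : Fin (n + 1) →₀ ℕ,
      (∏ i : Fin (n + 1), (g i) ^ (m i)).natDegree = ∑ i : Fin (n + 1), m i * (i : ℕ) := by
    intro m
    rw [Polynomial.natDegree_prod _ _ (fun i _ => pow_ne_zero _ (hgne i))]
    exact Finset.sum_congr rfl fun i _ => by rw [Polynomial.natDegree_pow, hnatdeg i]
  have hcoeff0 : MvPolynomial.coeff (Finsupp.single (Fin.last n) dF) F = 0 := by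
    have h0 : (MvPolynomial.aeval g F : Polynomial K).coeff (dF * n) = 0 := by
      rw [hQ0, Polynomial.coeff_zero]
    rw [hQsum, Polynomial.finset_sum_coeff] at h0
    simp only [Polynomial.coeff_C_mul] at h0
    rw [Finset.sum_eq_single (Finsupp.single (Fin.last n) dF)] at h0
    · have hprod : (∏ i : Fin (n + 1), (g i) ^ ((Finsupp.single (Fin.last n) dF) i))
          = g (Fin.last n) ^ dF := by
        rw [Finset.prod_eq_single (Fin.last n)
          (fun b _ hb => by rw [Finsupp.single_eq_of_ne' (Ne.symm hb), pow_zero])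
          (fun h => absurd (Finset.mem_univ _) h), Finsupp.single_eq_same]
      rw [hprod] at h0
      have hcp : (g (Fin.last n) ^ dF).coeff (dF * n) = L ^ dF := by
        have hh := Polynomial.coeff_pow_mul_natDegree (g (Fin.last n)) dF
        rw [hnatdeg (Fin.last n)] at hh
        simpa using hh
      rw [hcp] at h0
      exact (mul_eq_zero.mp h0).resolve_right (pow_ne_zero _ hLne)
    · intro m hm hne
      obtain ⟨i0, hi0ne, hi0⟩ := hex m hm hne
      have hlt : (∏ i : Fin (n + 1), (g i) ^ (m i)).natDegree < dF * n := by
        rw [hprodnat m]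
        have hdn : dF * n = ∑ i : Fin (n + 1), m i * n := by
          rw [← Finset.sum_mul, hsupp m hm]
        rw [hdn]
        refine Finset.sum_lt_sum (fun i _ => Nat.mul_le_mul_left _ (Nat.lt_succ_iff.mp i.isLt))
          ⟨i0, Finset.mem_univ _, ?_⟩
        exact Nat.mul_lt_mul_of_pos_left (Fin.val_lt_last hi0ne) (Nat.pos_of_ne_zero hi0)
      rw [Polynomial.coeff_eq_zero_of_natDegree_lt hlt, mul_zero]
    · intro h
      rw [MvPolynomial.notMem_support_iff.mp h, zero_mul]
  rw [MvPolynomial.eval_eq]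
  rw [Finset.sum_eq_single (Finsupp.single (Fin.last n) dF)]
  · rw [hcoeff0, zero_mul]
  · intro m hm hne
    obtain ⟨i0, hi0ne, hi0⟩ := hex m hm hne
    have hz : (if i0 = Fin.last n then (1 : K) else 0) ^ m i0 = 0 := by
      rw [if_neg hi0ne, zero_pow hi0]
    rw [Finset.prod_eq_zero (Finsupp.mem_support_iff.mpr hi0) hz, mul_zero]
  · intro h
    rw [MvPolynomial.notMem_support_iff.mp h, zero_mul]
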